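/- Let * be a continuous t-norm on a closed interval [a,b] of the reals. If q ∈ [a,b] is idempotent (q*q = q), then p*q = min{p,q} for all p ∈ [a,b]. -/
import Mathlib


open scoped ENNReal

/-- A distance distribution: a map `[0,∞] → [0,1]` with value `0` at `0`, `1` at `∞`,
monotone and left-continuous on `(0,∞)`. -/
structure IsDistanceDistribution (φ : ℝ≥0∞ → ℝ) : Prop where
  mem : ∀ t, φ t ∈ Set.Icc (0:ℝ) 1
  zero : φ 0 = 0
  top : φ ⊤ = 1
  mono : Monotone φ
  leftCont : ∀ t : ℝ≥0∞, 0 < t → t ≠ ⊤ → φ t = ⨆ s : {s : ℝ≥0∞ // s < t}, φ s.1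

/-- A continuous t-norm on the interval `[a,b] ⊆ ℝ`. -/
structure IsContinuousTNorm (a b : ℝ) (m : ℝ → ℝ → ℝ) : Prop where
  mem : ∀ ⦃p q : ℝ⦄, p ∈ Set.Icc a b → q ∈ Set.Icc a b → m p q ∈ Set.Icc a b
  comm : ∀ ⦃p q : ℝ⦄, p ∈ Set.Icc a b → q ∈ Set.Icc a b → m p q = m q p
  assoc : ∀ ⦃p q r : ℝ⦄, p ∈ Set.Icc a b → q ∈ Set.Icc a b → r ∈ Set.Icc a b →
    m (m p q) r = m p (m q r)
  unit : ∀ ⦃p : ℝ⦄, p ∈ Set.Icc a b → m p b = p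
  mono : ∀ ⦃p p' q q' : ℝ⦄, p ∈ Set.Icc a b → p' ∈ Set.Icc a b → q ∈ Set.Icc a b →
    q' ∈ Set.Icc a b → p ≤ p' → q ≤ q' → m p q ≤ m p' q'
  continuous : ContinuousOn (fun x : ℝ × ℝ => m x.1 x.2) (Set.Icc a b ×ˢ Set.Icc a b)

/-- `α` is a probabilistic metric on `X` with respect to the t-norm `m` on `[0,1]`. -/
structure IsProbMetric {X : Type*} (m : ℝ → ℝ → ℝ) (α : X → X → ℝ≥0∞ → ℝ) : Prop where
  dd : ∀ x y, IsDistanceDistribution (α x y)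
  refl : ∀ x (t : ℝ≥0∞), 0 < t → α x x t = 1
  symm : ∀ x y t, α x y t = α y x t
  sep : ∀ x y, (∀ t : ℝ≥0∞, 0 < t → α x y t = 1) → x = y
  triangle : ∀ x y z (r s : ℝ≥0∞), m (α y z r) (α x y s) ≤ α x z (r + s)

/-- The approach distance induced by a probabilistic metric:
`δ_α(x,A) = inf { r | sup_{a ∈ A} α(x,a,r) = 1 }`. -/
noncomputable def probDist {X : Type*} (α : X → X → ℝ≥0∞ → ℝ) (x : X) (A : Set X) : ℝ≥0∞ :=
  sInf {r : ℝ≥0∞ | sSup ((fun a => α x a r) '' A) = 1}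

/-- `δ` is an approach structure on `X`. -/
structure IsApproach {X : Type*} (δ : X → Set X → ℝ≥0∞) : Prop where
  point : ∀ x, δ x {x} = 0
  empty : ∀ x, δ x (∅ : Set X) = ⊤
  union : ∀ x A B, δ x (A ∪ B) = min (δ x A) (δ x B)
  triangle : ∀ x (A B : Set X), δ x A ≤ (⨆ b : B, δ b.1 A) + δ x B

/-- An approach structure is probabilistic metrizable w.r.t. the t-norm `m`. -/
def ProbMetrizable {X : Type*} (m : ℝ → ℝ → ℝ) (δ : X → Set X → ℝ≥0∞) : Prop :=
  ∃ α : X → X → ℝ≥0∞ → ℝ, IsProbMetric m α ∧ ∀ x A, δ x A = probDist α x A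

/-- The minimum t-norm. -/
def minT : ℝ → ℝ → ℝ := fun p q => min p q
/-- The product t-norm. -/
def prodT : ℝ → ℝ → ℝ := fun p q => p * q
/-- The Łukasiewicz t-norm. -/
def lukT : ℝ → ℝ → ℝ := fun p q => max 0 (p + q - 1)

/-- `q⁻`: the largest idempotent element of `m` in `[a, q]`. -/
noncomputable def idemBelow (a : ℝ) (m : ℝ → ℝ → ℝ) (q : ℝ) : ℝ :=
  sSup {p : ℝ | p ∈ Set.Icc a q ∧ m p p = p}
theorem stmt1 {a b : ℝ} (hab : a ≤ b) (m : ℝ → ℝ → ℝ) (hm : IsContinuousTNorm a b m)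
    {q : ℝ} (hq : q ∈ Set.Icc a b) (hqi : m q q = q) :
    ∀ p ∈ Set.Icc a b, m p q = min p q := by
    intro p hp
    -- continuity of x ↦ m x q on [a,b]
    have hcont : ContinuousOn (fun x : ℝ => m x q) (Set.Icc a b) := by
      have : ContinuousOn (fun x : ℝ => (x, q)) (Set.Icc a b) :=
        (continuous_id.prodMk continuous_const).continuousOn
      exact hm.continuous.comp this (fun x hx => Set.mk_mem_prod hx hq)
    have hamem : a ∈ Set.Icc a b := ⟨le_refl a, hab⟩
    have hbmem : b ∈ Set.Icc a b := ⟨hab, le_refl b⟩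
    have hmaq : m a q = a := by
      have h1 := (hm.mem hamem hq).1
      have h2 : m a q ≤ m a b := hm.mono hamem hamem hq hbmem (le_refl a) hq.2
      rw [hm.unit hamem] at h2
      linarith
    have hmbq : m b q = q := by
      rw [hm.comm hbmem hq, hm.unit hq]
    rcases le_total q p with hqp | hpq
    · -- q ≤ p : m p q = q
      have h1 : q ≤ m p q := by
        calc q = m q q := hqi.symm
          _ ≤ m p q := hm.mono hq hp hq hq hqp (le_refl q)
      have h2 : m p q ≤ q := by
        calc m p q ≤ m b q := hm.mono hp hbmem hq hq hp.2 (le_refl q)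
          _ = q := hmbq
      rw [min_eq_right hqp]
      linarith
    · -- p ≤ q : use IVT to find x with m x q = p
      have hpIcc : p ∈ Set.Icc (m a q) (m b q) := by
        rw [hmaq, hmbq]; exact ⟨hp.1, hpq⟩
      obtain ⟨x, hx, hfx⟩ := intermediate_value_Icc hab hcont hpIcc
      simp only [] at hfx
      have : m p q = p := by
        calc m p q = m (m x q) q := by rw [hfx]
          _ = m x (m q q) := hm.assoc hx hq hq
          _ = m x q := by rw [hqi]
          _ = p := hfx
      rw [this, min_eq_left hpq]
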